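/- Let Y ⊆ ℝ^d be nonempty closed convex, ρ > 0, and let F : ℝ^d → ℝ be differentiable with (2/ρ)-Lipschitz gradient. For any w ∈ Y, any error vector e ∈ ℝ^d, and any step size 0 < γ ≤ ρ/4, the inexact projected gradient step w⁺ := Π_Y(w − γ(∇F(w) + e)) satisfies the descent inequality F(w⁺) ≤ F(w) − ‖w⁺ − w‖²/(2γ) + 4γ‖e‖². -/

import Mathlib

open Set Metric intervalIntegral


/-- Descent lemma: `L`-Lipschitz gradient implies quadratic upper bound. -/
lemma descent_lemma {E : Type*} [NormedAddCommGroup E] [InnerProductSpace ℝ E]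
    [CompleteSpace E]
    (F : E → ℝ) (hF : Differentiable ℝ F) (L : ℝ) (hL : 0 ≤ L)
    (hlip : ∀ a b : E, ‖gradient F a - gradient F b‖ ≤ L * ‖a - b‖) (a b : E) :
    F b ≤ F a + inner ℝ (gradient F a) (b - a) + L / 2 * ‖b - a‖ ^ 2 := by
  set s := b - a with hs
  have hline : ∀ t : ℝ, HasDerivAt (fun t : ℝ => a + t • s) s t := fun t => by
    simpa using ((hasDerivAt_id t).smul_const s).const_add a
  have hφ : ∀ t : ℝ, HasDerivAt (fun t : ℝ => F (a + t • s))
      (inner ℝ (gradient F (a + t • s)) s : ℝ) t := fun t => by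
    have h1 := (hasGradientAt_iff_hasFDerivAt.mp
      (hF (a + t • s)).hasGradientAt).comp_hasDerivAt t (hline t)
    rw [InnerProductSpace.toDual_apply_apply] at h1; exact h1
  have hgc : Continuous (gradient F) := by
    have : LipschitzWith (Real.toNNReal L) (gradient F) :=
      LipschitzWith.of_dist_le_mul fun x y => by
        rw [dist_eq_norm, dist_eq_norm, Real.coe_toNNReal L hL]; exact hlip x y
    exact this.continuous
  have hcont : Continuous fun t : ℝ => (inner ℝ (gradient F (a + t • s)) s : ℝ) := by
    exact (hgc.comp (by continuity)).inner continuous_const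
  have hint : F (a + (1:ℝ) • s) - F (a + (0:ℝ) • s)
      = ∫ t in (0:ℝ)..1, (inner ℝ (gradient F (a + t • s)) s : ℝ) :=
    (integral_eq_sub_of_hasDerivAt (fun t _ => hφ t)
      (hcont.intervalIntegrable 0 1)).symm
  have hcont2 : Continuous fun t : ℝ => (inner ℝ (gradient F a) s : ℝ) + L * ‖s‖ ^ 2 * t := by
    continuity
  have hbound : (∫ t in (0:ℝ)..1, (inner ℝ (gradient F (a + t • s)) s : ℝ))
      ≤ ∫ t in (0:ℝ)..1, ((inner ℝ (gradient F a) s : ℝ) + L * ‖s‖ ^ 2 * t) := by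
    apply integral_mono_on zero_le_one (hcont.intervalIntegrable 0 1)
      (hcont2.intervalIntegrable 0 1)
    intro t ht
    have h1 : (inner ℝ (gradient F (a + t • s) - gradient F a) s : ℝ)
        ≤ ‖gradient F (a + t • s) - gradient F a‖ * ‖s‖ := real_inner_le_norm _ _
    have h2 : ‖gradient F (a + t • s) - gradient F a‖ ≤ L * ‖t • s‖ := by
      simpa using hlip (a + t • s) a
    have h3 : ‖t • s‖ = t * ‖s‖ := by
      rw [norm_smul, Real.norm_eq_abs, abs_of_nonneg ht.1]
    have h4 : (inner ℝ (gradient F (a + t • s)) s : ℝ)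
        = inner ℝ (gradient F a) s + inner ℝ (gradient F (a + t • s) - gradient F a) s := by
      rw [inner_sub_left]; ring
    have h5 : (inner ℝ (gradient F (a + t • s) - gradient F a) s : ℝ) ≤ L * ‖s‖ ^ 2 * t := by
      calc (inner ℝ (gradient F (a + t • s) - gradient F a) s : ℝ)
          ≤ ‖gradient F (a + t • s) - gradient F a‖ * ‖s‖ := h1
        _ ≤ (L * ‖t • s‖) * ‖s‖ := mul_le_mul_of_nonneg_right h2 (norm_nonneg s)
        _ = L * ‖s‖ ^ 2 * t := by rw [h3]; ring
    rw [h4]; linarith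
  have hval : (∫ t in (0:ℝ)..1, ((inner ℝ (gradient F a) s : ℝ) + L * ‖s‖ ^ 2 * t))
      = inner ℝ (gradient F a) s + L * ‖s‖ ^ 2 / 2 := by
    rw [integral_add (intervalIntegrable_const)
      ((by fun_prop : Continuous fun t : ℝ => L * ‖s‖ ^ 2 * t).intervalIntegrable 0 1)]
    have h6 : (∫ t in (0:ℝ)..1, L * ‖s‖ ^ 2 * t) = L * ‖s‖ ^ 2 / 2 := by
      rw [integral_const_mul, integral_id]; ring
    rw [h6, integral_const]; simp
  have hb : a + (1:ℝ) • s = b := by rw [one_smul, hs]; abel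
  have ha : a + (0:ℝ) • s = a := by simp
  rw [hb, ha] at hint
  linarith [hint, hbound, hval.le, hval.ge]

/-- Variational inequality for the metric projection onto a convex set. -/
lemma proj_vi {E : Type*} [NormedAddCommGroup E] [InnerProductSpace ℝ E]
    {Y : Set E} (hYconv : Convex ℝ Y) {u p : E} (hp : p ∈ Y)
    (hmin : ∀ v ∈ Y, ‖p - u‖ ≤ ‖v - u‖) :
    ∀ v ∈ Y, (inner ℝ (u - p) (v - p) : ℝ) ≤ 0 := by
  have : Nonempty Y := ⟨⟨p, hp⟩⟩
  have heq : ‖u - p‖ = ⨅ w : Y, ‖u - w‖ := by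
    apply le_antisymm
    · exact le_ciInf fun w => by
        rw [norm_sub_rev u p, norm_sub_rev u w]; exact hmin w w.2
    · have hbdd : BddBelow (Set.range fun w : Y => ‖u - (w : E)‖) := by
        refine ⟨0, ?_⟩
        rintro x ⟨w, rfl⟩
        exact norm_nonneg _
      exact ciInf_le hbdd ⟨p, hp⟩
  exact (norm_eq_iInf_iff_real_inner_le_zero hYconv hp).mp heq

/-- Descent inequality for one inexact projected gradient step on a
`(2/ρ)`-smooth function over a nonempty closed convex set `Y`. -/
theorem stmt16
    (d : ℕ)
    (Y : Set (EuclideanSpace ℝ (Fin d)))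
    (hYne : Y.Nonempty) (hYclosed : IsClosed Y) (hYconv : Convex ℝ Y)
    (ρ : ℝ) (hρ : 0 < ρ)
    (F : EuclideanSpace ℝ (Fin d) → ℝ)
    (hFdiff : Differentiable ℝ F)
    (hFsmooth : ∀ a b : EuclideanSpace ℝ (Fin d),
      ‖gradient F a - gradient F b‖ ≤ (2 / ρ) * ‖a - b‖)
    -- metric projection onto `Y`
    (projY : EuclideanSpace ℝ (Fin d) → EuclideanSpace ℝ (Fin d))
    (hproj : ∀ u, projY u ∈ Y ∧ ∀ v ∈ Y, ‖projY u - u‖ ≤ ‖v - u‖)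
    (w : EuclideanSpace ℝ (Fin d)) (hw : w ∈ Y)
    (e : EuclideanSpace ℝ (Fin d))
    (γ : ℝ) (hγpos : 0 < γ) (hγ : γ ≤ ρ / 4) :
    F (projY (w - γ • (gradient F w + e)))
      ≤ F w - ‖projY (w - γ • (gradient F w + e)) - w‖ ^ 2 / (2 * γ) + 4 * γ * ‖e‖ ^ 2 := by
  set g := gradient F w with hg
  set u := w - γ • (g + e) with hu
  set p := projY u with hp
  set s := p - w with hsdef
  have hpY := (hproj u).1
  have hvi : (inner ℝ (u - p) (w - p) : ℝ) ≤ 0 :=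
    proj_vi hYconv hpY (hproj u).2 w hw
  -- expand the variational inequality
  have h1 : u - p = -(s + γ • (g + e)) := by rw [hu, hsdef]; module
  have h2 : w - p = -s := by rw [hsdef]; abel
  have hexp : (inner ℝ (u - p) (w - p) : ℝ)
      = ‖s‖ ^ 2 + γ * ((inner ℝ g s : ℝ) + (inner ℝ e s : ℝ)) := by
    rw [h1, h2, inner_neg_neg, inner_add_left, real_inner_smul_left,
      real_inner_self_eq_norm_sq, inner_add_left]
  have hkey : ‖s‖ ^ 2 + γ * ((inner ℝ g s : ℝ) + (inner ℝ e s : ℝ)) ≤ 0 := hexp ▸ hvi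
  -- descent lemma
  have hdesc : F p ≤ F w + (inner ℝ g s : ℝ) + (2 / ρ) / 2 * ‖s‖ ^ 2 := by
    have := descent_lemma F hFdiff (2 / ρ) (by positivity) hFsmooth w p
    rwa [← hsdef, ← hg] at this
  -- arithmetic
  have hinnergs : (inner ℝ g s : ℝ) ≤ -‖s‖ ^ 2 / γ - (inner ℝ e s : ℝ) := by
    have h3 : (inner ℝ g s : ℝ) + (inner ℝ e s : ℝ) ≤ -‖s‖ ^ 2 / γ :=
      (le_div_iff₀ hγpos).mpr (by linarith)
    linarith
  have hcs : -(inner ℝ e s : ℝ) ≤ ‖e‖ * ‖s‖ := by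
    have := abs_real_inner_le_norm e s
    have habs := neg_abs_le (inner ℝ e s : ℝ)
    linarith
  have hyoung : ‖e‖ * ‖s‖ ≤ ‖s‖ ^ 2 / (4 * γ) + γ * ‖e‖ ^ 2 := by
    have h4 : ‖e‖ * ‖s‖ - γ * ‖e‖ ^ 2 ≤ ‖s‖ ^ 2 / (4 * γ) :=
      (le_div_iff₀ (by positivity)).mpr (by nlinarith [sq_nonneg (‖s‖ - 2 * γ * ‖e‖)])
    linarith
  have hsmooth2 : (2 / ρ) / 2 * ‖s‖ ^ 2 ≤ ‖s‖ ^ 2 / (4 * γ) := by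
    have h5 : (2 / ρ) / 2 * ‖s‖ ^ 2 = ‖s‖ ^ 2 / ρ := by ring
    rw [h5]
    exact div_le_div_of_nonneg_left (sq_nonneg _) (by positivity) (by linarith)
  have hE : γ * ‖e‖ ^ 2 ≤ 4 * γ * ‖e‖ ^ 2 := by nlinarith [sq_nonneg ‖e‖]
  have hhalf : ‖s‖ ^ 2 / (4 * γ) + ‖s‖ ^ 2 / (4 * γ) = ‖s‖ ^ 2 / (2 * γ) := by ring
  have hγdiv : -‖s‖ ^ 2 / γ + ‖s‖ ^ 2 / (4 * γ) + ‖s‖ ^ 2 / (4 * γ)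
      = -(‖s‖ ^ 2 / (2 * γ)) := by ring
  linarith
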